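/- arXiv:1510.07189 — 2 statements merged into one kernel-verified Lean document; each statement's English description precedes it below -/
import Mathlib

section
/- Let n ∈ ℕ and d, p ∈ ℝⁿ with p ≠ 0, and let r ∈ [0, ζ). Then U_r ⊆ U_dp, and |n_dp(z)| ≥ ‖p‖·(ζ − r) for all z ∈ U_r. -/
open Complex Set

/-- The principal branch of the complex square root,
`√z := √|z| · (z+|z|)/|z+|z||`. -/
noncomputable def csqrt (z : ℂ) : ℂ :=
  (Real.sqrt ‖z‖ : ℂ) *
    ((z + ((‖z‖ : ℝ) : ℂ)) / ((‖z + ((‖z‖ : ℝ) : ℂ)‖ : ℝ) : ℂ))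

/-- The Euclidean norm on `ℝⁿ`. -/
noncomputable def euclNorm {n : ℕ} (x : Fin n → ℝ) : ℝ := Real.sqrt (∑ j, (x j) ^ 2)

lemma csqrt_abs (z : ℂ) (h : z + ((‖z‖ : ℝ) : ℂ) ≠ 0) :
    ‖csqrt z‖ = Real.sqrt ‖z‖ := by
  unfold csqrt
  rw [norm_mul, norm_div, Complex.norm_real, Complex.norm_real,
    Real.norm_of_nonneg (Real.sqrt_nonneg _), Real.norm_of_nonneg (norm_nonneg _),
    div_self (by simpa using h), mul_one]


lemma aux_cut (P wi x : ℝ) (u : ℂ) (hP : 0 < P) (hx : 0 < x) (hwi0 : 0 ≤ wi)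
    (h1 : ((-x : ℝ) : ℂ) = (P : ℂ) * (u ^ 2 + (wi : ℂ) ^ 2)) :
    u.re = 0 ∧ wi ≤ |u.im| := by
  have hPne : (P : ℂ) ≠ 0 := by exact_mod_cast ne_of_gt hP
  push_cast at h1
  set y : ℝ := -(x / P) - wi ^ 2 with hy
  have hyP : ((y * P : ℝ) : ℂ) = ((-x - wi ^ 2 * P : ℝ) : ℂ) := by
    norm_cast
    rw [hy]; field_simp
  push_cast at hyP
  have hu2 : u ^ 2 = ((y : ℝ) : ℂ) := by
    apply mul_left_cancel₀ hPne
    linear_combination -h1 - hyP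
  have him : (0 : ℝ) = 2 * u.re * u.im := by
    have h := congrArg Complex.im hu2
    rw [pow_two] at h
    simp [Complex.mul_im] at h
    linarith
  have hre2 : y = u.re ^ 2 - u.im ^ 2 := by
    have h := congrArg Complex.re hu2
    rw [pow_two] at h
    simp [Complex.mul_re] at h
    nlinarith [h]
  have hxp : 0 < x / P := div_pos hx hP
  have hy_neg : y < 0 := by
    rw [hy]; nlinarith [sq_nonneg wi]
  have hcases : u.re = 0 ∨ u.im = 0 := by
    rcases mul_eq_zero.mp (show u.re * u.im = 0 by linarith) with h | h
    · exact Or.inl h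
    · exact Or.inr h
  rcases hcases with h | h
  · refine ⟨h, ?_⟩
    have hre2' : y = -u.im ^ 2 := by rw [h] at hre2; simpa using hre2
    have huim2 : wi ^ 2 ≤ u.im ^ 2 := by
      rw [hy] at hre2'; nlinarith
    have := Real.sqrt_le_sqrt huim2
    rwa [Real.sqrt_sq hwi0, Real.sqrt_sq_eq_abs] at this
  · exfalso
    rw [h] at hre2
    simp at hre2
    nlinarith [sq_nonneg u.re]

set_option maxHeartbeats 1000000 in
/-- for `0 ≤ r < ζ` the neighborhood `U_r` of `[−1,1]` is contained in
`U_dp` and `|n_dp(z)| ≥ ‖p‖·(ζ − r)` on `U_r`. -/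
theorem stmt2 (n : ℕ) (d p : Fin n → ℝ) (hp : p ≠ 0)
    (wr : ℝ) (hwr : wr = (∑ j, d j * p j) / (euclNorm p) ^ 2)
    (wi : ℝ) (hwi : wi = Real.sqrt ((euclNorm d) ^ 2 / (euclNorm p) ^ 2 - wr ^ 2))
    (w : ℂ) (hw : w = (wr : ℂ) + (wi : ℂ) * Complex.I)
    (U : Set ℂ) (hU : U = {z : ℂ | ¬ (z.re = wr ∧ wi ≤ |z.im|)})
    (ndp : ℂ → ℂ)
    (hndp : ndp = fun z => csqrt (∑ j, ((d j : ℂ) - z * (p j : ℂ)) * ((d j : ℂ) - z * (p j : ℂ))))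
    (ζ : ℝ) (hζ : ζ = sInf {x : ℝ | ∃ t ∈ Set.Icc (-1 : ℝ) 1, x = euclNorm (d - t • p) / euclNorm p})
    (r : ℝ) (hr0 : 0 ≤ r) (hrζ : r < ζ)
    (Ur : Set ℂ) (hUr : Ur = {z : ℂ | ∃ t ∈ Set.Icc (-1 : ℝ) 1, ‖z - (t : ℂ)‖ ≤ r}) :
    Ur ⊆ U ∧ ∀ z ∈ Ur, euclNorm p * (ζ - r) ≤ ‖ndp z‖ := by
  set P : ℝ := ∑ j, (p j)^2 with hPdef
  set D : ℝ := ∑ j, (d j)^2 with hDdef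
  set C : ℝ := ∑ j, d j * p j with hCdef
  have hP : 0 < P := by
    have : ∃ j, p j ≠ 0 := by
      by_contra hc; push_neg at hc; exact hp (funext hc)
    obtain ⟨j, hj⟩ := this
    exact Finset.sum_pos' (fun i _ => sq_nonneg _) ⟨j, Finset.mem_univ j, by positivity⟩
  have hD : 0 ≤ D := Finset.sum_nonneg (fun i _ => sq_nonneg _)
  have hNp2 : euclNorm p ^ 2 = P := Real.sq_sqrt hP.le
  have hNpPos : 0 < euclNorm p := Real.sqrt_pos.mpr hP
  have hNd2 : euclNorm d ^ 2 = D := Real.sq_sqrt hD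
  have hCS : C ^ 2 ≤ D * P := Finset.sum_mul_sq_le_sq_mul_sq _ _ _
  have hwrP : wr * P = C := by
    rw [hwr, hNp2]; field_simp
  have hwinn : 0 ≤ D / P - wr ^ 2 := by
    have hwr2 : wr ^ 2 = C ^ 2 / P ^ 2 := by rw [hwr, hNp2, div_pow]
    rw [hwr2, div_sub_div _ _ (ne_of_gt hP) (by positivity : (P:ℝ)^2 ≠ 0)]
    apply div_nonneg _ (by positivity)
    nlinarith
  have hwi0 : 0 ≤ wi := by rw [hwi]; exact Real.sqrt_nonneg _
  have hwisq : wi ^ 2 = D / P - wr ^ 2 := by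
    rw [hwi, hNd2, hNp2, Real.sq_sqrt hwinn]
  have hwP : (wr ^ 2 + wi ^ 2) * P = D := by
    rw [hwisq]; field_simp; ring
  -- complex factorization
  have hfact : ∀ z : ℂ, (∑ j, ((d j : ℂ) - z * (p j : ℂ)) * ((d j : ℂ) - z * (p j : ℂ)))
      = (P : ℂ) * ((z - (wr:ℂ))^2 + (wi:ℂ)^2) := by
    intro z
    have expand : (∑ j, ((d j : ℂ) - z * (p j : ℂ)) * ((d j : ℂ) - z * (p j : ℂ)))
        = (D : ℂ) - 2*z*(C : ℂ) + z^2*(P : ℂ) := by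
      rw [hDdef, hCdef, hPdef]
      push_cast
      rw [Finset.mul_sum, Finset.mul_sum, ← Finset.sum_sub_distrib, ← Finset.sum_add_distrib]
      exact Finset.sum_congr rfl (fun j _ => by ring)
    rw [expand]
    have h1c : (wr : ℂ) * (P : ℂ) = (C : ℂ) := by exact_mod_cast hwrP
    have h2c : ((wr : ℂ)^2 + (wi : ℂ)^2) * (P : ℂ) = (D : ℂ) := by exact_mod_cast hwP
    linear_combination 2*z*h1c - h2c
  -- real factorization along the real axis
  have hreal : ∀ t : ℝ, euclNorm (d - t • p) ^ 2 = P * ((t - wr)^2 + wi^2) := by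
    intro t
    have hsum : euclNorm (d - t • p) ^ 2 = ∑ j, (d j - t * p j)^2 := by
      unfold euclNorm
      rw [Real.sq_sqrt (Finset.sum_nonneg (fun i _ => sq_nonneg _))]
      exact Finset.sum_congr rfl (fun j _ => by simp [Pi.sub_apply, Pi.smul_apply, smul_eq_mul])
    rw [hsum]
    have h := hfact (t : ℂ)
    have h2 : ((∑ j, (d j - t * p j)^2 : ℝ) : ℂ) = ((P * ((t - wr)^2 + wi^2) : ℝ) : ℂ) := by
      push_cast
      rw [← h]
      exact Finset.sum_congr rfl (fun j _ => by push_cast; ring)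
    exact_mod_cast h2
  have hdist : ∀ t : ℝ, euclNorm (d - t • p) / euclNorm p = Real.sqrt ((t - wr)^2 + wi^2) := by
    intro t
    have h0 : 0 ≤ euclNorm (d - t • p) := Real.sqrt_nonneg _
    have hE : euclNorm (d - t • p) = Real.sqrt P * Real.sqrt ((t - wr)^2 + wi^2) := by
      rw [← Real.sqrt_sq h0, hreal t, Real.sqrt_mul hP.le]
    have hEp : euclNorm p = Real.sqrt P := rfl
    rw [hE, hEp, mul_comm, mul_div_assoc, div_self (by positivity), mul_one]
  -- ζ is a lower bound
  have hζle : ∀ t : ℝ, t ∈ Set.Icc (-1:ℝ) 1 → ζ ≤ Real.sqrt ((t - wr)^2 + wi^2) := by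
    intro t ht
    rw [← hdist t, hζ]
    apply csInf_le
    · refine ⟨0, fun x hx => ?_⟩
      obtain ⟨s, _, rfl⟩ := hx
      exact div_nonneg (Real.sqrt_nonneg _) (Real.sqrt_nonneg _)
    · exact ⟨t, ht, rfl⟩
  have hζ0 : 0 < ζ := lt_of_le_of_lt hr0 hrζ
  have habs : ∀ z : ℂ, ‖z‖ = Real.sqrt (z.re^2 + z.im^2) := by
    intro z; rw [Complex.norm_def, Complex.normSq_apply]; ring_nf
  -- Part 1
  have part1 : Ur ⊆ U := by
    intro z hz
    rw [hUr] at hz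
    obtain ⟨t, ht, hzt⟩ := hz
    rw [hU]
    rintro ⟨hre, him⟩
    have h1 : Real.sqrt ((t - wr)^2 + wi^2) ≤ ‖z - (t:ℂ)‖ := by
      rw [habs]
      apply Real.sqrt_le_sqrt
      have h2 : wi^2 ≤ z.im^2 := by nlinarith [abs_nonneg z.im, _root_.sq_abs z.im]
      simp only [Complex.sub_re, Complex.ofReal_re, Complex.sub_im, Complex.ofReal_im, hre,
        sub_zero]
      nlinarith
    have := hζle t ht
    linarith
  refine ⟨part1, ?_⟩
  -- Part 2
  intro z hz
  have hzU := part1 hz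
  rw [hUr] at hz
  obtain ⟨t, ht, hzt⟩ := hz
  rw [hU] at hzU
  simp only [Set.mem_setOf_eq] at hzU
  set w' : ℂ := (wr : ℂ) - (wi : ℂ) * Complex.I with hw'
  have habs_tw : ‖(t:ℂ) - w‖ = Real.sqrt ((t - wr)^2 + wi^2) := by
    rw [habs, hw]
    congr 1
    simp [Complex.sub_re, Complex.sub_im, Complex.add_re, Complex.add_im]
  have habs_tw' : ‖(t:ℂ) - w'‖ = Real.sqrt ((t - wr)^2 + wi^2) := by
    rw [habs, hw']
    congr 1
    simp [Complex.sub_re, Complex.sub_im]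
  have hζt := hζle t ht
  have hts : ‖(t:ℂ) - z‖ = ‖z - (t:ℂ)‖ := by
    rw [← norm_neg]; congr 1; ring
  have hbw : ζ - r ≤ ‖z - w‖ := by
    have htri : ‖(t:ℂ) - w‖ ≤ ‖(t:ℂ) - z‖ + ‖z - w‖ := by
      calc ‖(t:ℂ) - w‖ = ‖((t:ℂ) - z) + (z - w)‖ := by congr 1; ring
        _ ≤ _ := norm_add_le _ _
    rw [habs_tw, hts] at htri
    linarith
  have hbw' : ζ - r ≤ ‖z - w'‖ := by
    have htri : ‖(t:ℂ) - w'‖ ≤ ‖(t:ℂ) - z‖ + ‖z - w'‖ := by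
      calc ‖(t:ℂ) - w'‖ = ‖((t:ℂ) - z) + (z - w')‖ := by congr 1; ring
        _ ≤ _ := norm_add_le _ _
    rw [habs_tw', hts] at htri
    linarith
  set fz : ℂ := ∑ j, ((d j : ℂ) - z * (p j : ℂ)) * ((d j : ℂ) - z * (p j : ℂ)) with hfz
  have hfzfact : fz = (P : ℂ) * ((z - w) * (z - w')) := by
    rw [hfz, hfact z]
    congr 1
    rw [hw, hw']
    linear_combination ((wi:ℂ)^2) * Complex.I_sq
  have hfzabs : ‖fz‖ = P * (‖z - w‖ * ‖z - w'‖) := by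
    rw [hfzfact, norm_mul, norm_mul, Complex.norm_real, Real.norm_of_nonneg hP.le]
  have hζr0 : 0 ≤ ζ - r := by linarith
  have hlow : P * (ζ - r)^2 ≤ ‖fz‖ := by
    rw [hfzabs]
    calc P * (ζ - r)^2 = P * ((ζ - r) * (ζ - r)) := by ring
      _ ≤ P * (‖z - w‖ * ‖z - w'‖) :=
        mul_le_mul_of_nonneg_left
          (mul_le_mul hbw hbw' hζr0 (norm_nonneg _)) hP.le
  have hζrpos : 0 < ζ - r := by linarith
  have hfzpos : 0 < ‖fz‖ := lt_of_lt_of_le (by positivity) hlow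
  have hPne : (P : ℂ) ≠ 0 := by exact_mod_cast ne_of_gt hP
  -- fz is not a nonpositive real
  have hne : fz + ((‖fz‖ : ℝ) : ℂ) ≠ 0 := by
    intro hcon
    have h1 : ((-(‖fz‖) : ℝ) : ℂ)
        = (P : ℂ) * ((z - (wr : ℂ)) ^ 2 + (wi : ℂ) ^ 2) := by
      have hfzv : fz = ((-(‖fz‖) : ℝ) : ℂ) := by push_cast; linear_combination hcon
      rw [← hfzv, hfz, hfact z]
    obtain ⟨hre0, hwile⟩ := aux_cut P wi ‖fz‖ (z - (wr : ℂ)) hP hfzpos hwi0 h1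
    apply hzU
    constructor
    · have : (z - (wr : ℂ)).re = z.re - wr := by simp
      rw [this] at hre0
      linarith
    · have : (z - (wr : ℂ)).im = z.im := by simp
      rwa [this] at hwile
  -- conclude
  have hnz : ‖ndp z‖ = Real.sqrt ‖fz‖ := by
    rw [hndp]
    exact csqrt_abs fz hne
  rw [hnz]
  have hgoal : euclNorm p * (ζ - r) = Real.sqrt (P * (ζ - r)^2) := by
    rw [Real.sqrt_mul hP.le, Real.sqrt_sq hζr0]
    rfl
  rw [hgoal]
  exact Real.sqrt_le_sqrt hlow
end

section
/- Let d, p ∈ ℝ³ with p ≠ 0 and c ∈ ℝ³ with ‖c‖ = 1, and let r ∈ [0, ζ). Then for every z ∈ U_r there exists t ∈ [−1,1] such that |Im(n_dp(z) − ⟨d−zp, c⟩)| ≤ ‖p‖·( ‖(d−tp)/‖d−tp‖ − c‖·r + r²/(2(ζ−r)) ). -/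
open Complex Set ComplexConjugate

lemma re_add_abs_nonneg (z : ℂ) : 0 ≤ z.re + ‖z‖ := by
  have := Complex.abs_re_le_norm z
  cases abs_le.mp this; linarith

lemma csqrt_eq (z : ℂ) : csqrt z =
    ((Real.sqrt ‖z‖ / ‖z + ((‖z‖ : ℝ) : ℂ)‖ : ℝ) : ℂ)
      * (z + ((‖z‖ : ℝ) : ℂ)) := by
  unfold csqrt; push_cast; ring

lemma csqrt_re_nonneg (z : ℂ) : 0 ≤ (csqrt z).re := by
  rw [csqrt_eq, Complex.re_ofReal_mul]
  have h1 := re_add_abs_nonneg z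
  have h2 : (0:ℝ) ≤ Real.sqrt ‖z‖ / ‖z + ((‖z‖ : ℝ) : ℂ)‖ :=
    div_nonneg (Real.sqrt_nonneg _) (norm_nonneg _)
  have h3 : (z + ((‖z‖ : ℝ) : ℂ)).re = z.re + ‖z‖ := by simp
  rw [h3]; exact mul_nonneg h2 h1

lemma csqrt_sq (z : ℂ) (hz : ¬(z.im = 0 ∧ z.re ≤ 0)) : (csqrt z) ^ 2 = z := by
  set av : ℂ := ((‖z‖ : ℝ) : ℂ) with hav
  have hne : z + av ≠ 0 := by
    intro h
    have him : z.im = 0 := by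
      have := congrArg Complex.im h; simpa [hav] using this
    have hre : z.re + ‖z‖ = 0 := by
      have := congrArg Complex.re h; simpa [hav] using this
    exact hz ⟨him, by nlinarith [norm_nonneg z]⟩
  have hcne : conj (z + av) ≠ 0 := by
    intro h; apply hne
    have := congrArg conj h; simpa using this
  have habs : ((‖z + av‖ : ℝ) : ℂ) ^ 2 = (z + av) * conj (z + av) := by
    rw [← Complex.ofReal_pow, Complex.sq_norm, Complex.mul_conj]
  have hzz : z * conj z = av ^ 2 := by
    rw [Complex.mul_conj, hav, ← Complex.ofReal_pow, Complex.sq_norm]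
  have habsne : ((‖z + av‖ : ℝ) : ℂ) ≠ 0 := by
    simpa using hne
  have hconj : conj (z + av) = conj z + av := by
    simp [hav, map_add, Complex.conj_ofReal]
  unfold csqrt
  rw [mul_pow, div_pow, ← Complex.ofReal_pow, Real.sq_sqrt (norm_nonneg z), ← hav, habs,
    hconj]
  have h5 : conj z + av ≠ 0 := by rw [← hconj]; exact hcne
  field_simp
  linear_combination (-1 : ℂ) * hzz

lemma csqrt_sq_self (A : ℂ) (hA : 0 < A.re) : csqrt (A ^ 2) = A := by
  have hz : ¬((A ^ 2).im = 0 ∧ (A ^ 2).re ≤ 0) := by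
    rintro ⟨h1, h2⟩
    have hre : (A ^ 2).re = A.re ^ 2 - A.im ^ 2 := by
      rw [pow_two, Complex.mul_re]; ring
    have him : (A ^ 2).im = 2 * A.re * A.im := by
      rw [pow_two, Complex.mul_im]; ring
    rw [him] at h1
    have hAim : A.im = 0 := by
      rcases mul_eq_zero.mp h1 with h | h
      · rcases mul_eq_zero.mp h with h' | h'
        · norm_num at h'
        · linarith
      · exact h
    rw [hre, hAim] at h2
    nlinarith
  have hsq := csqrt_sq (A ^ 2) hz
  have hre := csqrt_re_nonneg (A ^ 2)
  have hfac : (csqrt (A ^ 2) - A) * (csqrt (A ^ 2) + A) = 0 := by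
    linear_combination hsq
  rcases mul_eq_zero.mp hfac with h | h
  · exact sub_eq_zero.mp h
  · exfalso
    have : (csqrt (A ^ 2)).re = -A.re := by
      have := congrArg Complex.re h
      simp at this; linarith
    linarith

lemma ineq1 (ζ r y w : ℝ) (hr0 : 0 ≤ r) (hrζ : r < ζ) (hy0 : 0 ≤ y) (hyζ : y ≤ ζ)
    (hw : w^2 ≤ y^2 + r^2) :
    2*(ζ-r)*w^2 ≤ ζ^3 + ζ^2*y := by
  have hζ0 : 0 < ζ := lt_of_le_of_lt hr0 hrζ
  have h1 : 2*(ζ-r)*w^2 ≤ 2*(ζ-r)*y*ζ + 2*(ζ-r)*r^2 := by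
    nlinarith [mul_nonneg hy0 (sub_nonneg.2 hyζ)]
  have h2 : 2*(ζ-r)*r^2 ≤ ζ^3 := by
    nlinarith [mul_nonneg hr0 (sq_nonneg (ζ - r)), mul_nonneg (sub_nonneg.2 hrζ.le) hr0]
  rcases le_or_gt ζ (2*r) with h | h
  · nlinarith [mul_nonneg (mul_nonneg hy0 hζ0.le) (sub_nonneg.2 h)]
  · nlinarith [mul_nonneg (sub_nonneg.2 hyζ) (mul_nonneg hζ0.le (sub_nonneg.2 h.le)),
      mul_nonneg hr0 (sq_nonneg (ζ - r)), mul_nonneg (mul_nonneg hr0 hζ0.le) (sub_nonneg.2 hrζ.le)]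

lemma ineq2aux (ζ g s : ℝ) (hs0 : 0 ≤ s) (hsg : s ≤ g) (hg : g ≤ ζ) :
    2*(g - s)*(ζ - g)*(ζ + g) + s*g*ζ ≤ ζ^3 := by
  have hζ0 : 0 ≤ ζ := le_trans (le_trans hs0 hsg) hg
  have hg0 : 0 ≤ g := le_trans hs0 hsg
  have h1 : 0 ≤ ζ^3 - 2*g*ζ^2 + 2*g^3 := by
    nlinarith [pow_nonneg (sub_nonneg.2 hg) 3, mul_nonneg hg0 (sq_nonneg (2*(ζ-g) - g)),
      mul_nonneg hg0 (sq_nonneg g)]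
  have h2 : 0 ≤ ζ*(ζ^2 - g^2) := by nlinarith [mul_nonneg (sub_nonneg.2 hg) (add_nonneg hζ0 hg0)]
  rcases eq_or_lt_of_le hg0 with hg0' | hg0'
  · have hs : s = 0 := le_antisymm (hg0' ▸ hsg) hs0
    rw [hs, ← hg0']
    nlinarith [pow_nonneg hζ0 3]
  · nlinarith [mul_nonneg (sub_nonneg.2 hsg) h1, mul_nonneg hs0 h2, hg0']

lemma ineq2 (ζ g r s : ℝ) (hg0 : 0 ≤ g) (hg : g ≤ ζ) (hs0 : 0 ≤ s) (hsr : s ≤ r) (hr : r < ζ)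
    (hR : 0 < 2*(ζ-r)*(ζ^2-g^2) - ζ^3 + s*g*ζ) :
    (2*(ζ-r)*(ζ^2-g^2) - ζ^3 + s*g*ζ)^2 ≤ ζ^4*(ζ^2 - 2*s*g + 2*s^2 - r^2) := by
  have hr0 : 0 ≤ r := le_trans hs0 hsr
  have hζ0 : 0 < ζ := lt_of_le_of_lt hr0 hr
  have hRle : 2*(ζ-r)*(ζ^2-g^2) - ζ^3 + s*g*ζ ≤ ζ^2*(ζ-r) := by
    nlinarith [mul_nonneg (mul_nonneg hg0 hg0) (sub_nonneg.2 hr.le),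
      mul_nonneg (mul_nonneg (sub_nonneg.2 hsr) hg0) hζ0.le,
      mul_nonneg (mul_nonneg hr0 (sub_nonneg.2 hg)) hζ0.le]
  have hkey : s*(g-s) ≤ r*(ζ-r) := by
    rcases le_or_gt (g - s) (ζ - r) with h | h
    · rcases le_or_gt (g - s) 0 with h0 | h0
      · nlinarith [mul_nonneg hr0 (sub_nonneg.2 hr.le), mul_nonneg hs0 (neg_nonneg.2 h0)]
      · nlinarith [mul_le_mul hsr h h0.le hr0]
    · exfalso
      have hsg : s ≤ g := by nlinarith
      have haux := ineq2aux ζ g s hs0 hsg hg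
      have hζg2 : (0:ℝ) ≤ ζ^2 - g^2 := by nlinarith
      have := mul_le_mul_of_nonneg_right h.le hζg2
      nlinarith [haux, this]
  have h4 : (2*(ζ-r)*(ζ^2-g^2) - ζ^3 + s*g*ζ)^2 ≤ (ζ^2*(ζ-r))^2 := by
    nlinarith [mul_self_le_mul_self hR.le hRle]
  nlinarith [h4, mul_nonneg (pow_nonneg hζ0.le 4) (sub_nonneg.2 hkey)]

lemma aux2 (ζ r P σ g w b nre Are : ℝ) (hP0 : 0 < P) (hr0 : 0 ≤ r) (hrζ : r < ζ)
    (hσ0 : 0 ≤ σ) (hσr : σ ≤ r) (hg0 : 0 ≤ g) (hgw : g^2 + w^2 = ζ^2)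
    (hAre : Are*ζ = ζ^2*P - σ*g*P) (hnre : 0 ≤ nre)
    (hnre2 : P^2*(ζ^2 - 2*σ*g + 2*σ^2 - r^2) ≤ nre^2)
    (hb : b*ζ^2 = w^2*P^2) :
    2*(ζ-r)*b ≤ (nre+Are)*P := by
  have hζ0 : 0 < ζ := lt_of_le_of_lt hr0 hrζ
  have hgζ : g ≤ ζ := by nlinarith [sq_nonneg w]
  have hw2 : w^2 = ζ^2 - g^2 := by linarith
  have key : P*(2*(ζ-r)*(ζ^2-g^2) - ζ^3 + σ*g*ζ) ≤ nre*ζ^2 := by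
    rcases le_or_gt (2*(ζ-r)*(ζ^2-g^2) - ζ^3 + σ*g*ζ) 0 with hR | hR
    · have : P*(2*(ζ-r)*(ζ^2-g^2) - ζ^3 + σ*g*ζ) ≤ 0 := mul_nonpos_of_nonneg_of_nonpos hP0.le hR
      nlinarith [mul_nonneg hnre (sq_nonneg ζ)]
    · have hkey := ineq2 ζ g r σ hg0 hgζ hσ0 hσr hrζ hR
      have h5 : (P*(2*(ζ-r)*(ζ^2-g^2) - ζ^3 + σ*g*ζ))^2 ≤ (nre*ζ^2)^2 := by
        nlinarith [mul_le_mul_of_nonneg_left hnre2 (pow_nonneg hζ0.le 4),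
          mul_le_mul_of_nonneg_left hkey (sq_nonneg P)]
      nlinarith [mul_pos hP0 hR, mul_nonneg hnre (sq_nonneg ζ)]
  have hζ2 : (0:ℝ) < ζ^2 := by positivity
  rw [← mul_le_mul_iff_of_pos_right hζ2]
  calc 2*(ζ-r)*b*ζ^2 = 2*(ζ-r)*(w^2*P^2) := by rw [mul_assoc, hb]
    _ = 2*(ζ-r)*((ζ^2-g^2)*P^2) := by rw [hw2]
    _ ≤ nre*P*ζ^2 + ζ^3*P^2 - σ*g*ζ*P^2 := by
        nlinarith [mul_le_mul_of_nonneg_left key hP0.le]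
    _ = (nre+Are)*P*ζ^2 := by linear_combination (-(P*ζ))*hAre

set_option maxHeartbeats 2000000 in
/-- exponent bound: for every `z ∈ U_r` there is `t ∈ [−1,1]` with
`|Im(n_dp(z) − ⟨d−zp, c⟩)| ≤ ‖p‖·( ‖(d−tp)/‖d−tp‖ − c‖·r + r²/(2(ζ−r)) )`. -/
theorem stmt5 (d p c : Fin 3 → ℝ) (hp : p ≠ 0) (hc : euclNorm c = 1)
    (wr : ℝ) (hwr : wr = (∑ j, d j * p j) / (euclNorm p) ^ 2)
    (wi : ℝ) (hwi : wi = Real.sqrt ((euclNorm d) ^ 2 / (euclNorm p) ^ 2 - wr ^ 2))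
    (w : ℂ) (hw : w = (wr : ℂ) + (wi : ℂ) * Complex.I)
    (ndp : ℂ → ℂ)
    (hndp : ndp = fun z => csqrt (∑ j, ((d j : ℂ) - z * (p j : ℂ)) * ((d j : ℂ) - z * (p j : ℂ))))
    (ζ : ℝ) (hζ : ζ = sInf {x : ℝ | ∃ t ∈ Set.Icc (-1 : ℝ) 1, x = euclNorm (d - t • p) / euclNorm p})
    (r : ℝ) (hr0 : 0 ≤ r) (hrζ : r < ζ)
    (Ur : Set ℂ) (hUr : Ur = {z : ℂ | ∃ t ∈ Set.Icc (-1 : ℝ) 1, ‖z - (t : ℂ)‖ ≤ r}) :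
    ∀ z ∈ Ur, ∃ t ∈ Set.Icc (-1 : ℝ) 1,
      |(ndp z - ∑ j, ((d j : ℂ) - z * (p j : ℂ)) * (c j : ℂ)).im| ≤
        euclNorm p * (euclNorm ((euclNorm (d - t • p))⁻¹ • (d - t • p) - c) * r
          + r ^ 2 / (2 * (ζ - r))) := by
  intro z hz
  rw [hUr] at hz
  obtain ⟨t₀, ht₀, hzt₀⟩ := hz
  have hζpos : 0 < ζ := lt_of_le_of_lt hr0 hrζ
  set t : ℝ := max (-1) (min 1 z.re) with htdef
  have ht : t ∈ Set.Icc (-1:ℝ) 1 :=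
    ⟨le_max_left _ _, max_le (by norm_num) (min_le_left _ _)⟩
  refine ⟨t, ht, ?_⟩
  set P : ℝ := euclNorm p with hPdef
  set α : ℝ := euclNorm (d - t • p) with hαdef
  -- basic facts about sums and norms
  have hP2 : P^2 = p 0^2 + p 1^2 + p 2^2 := by
    rw [hPdef, euclNorm, Real.sq_sqrt (by positivity), Fin.sum_univ_three]
  have hα2 : α^2 = (d 0 - t*p 0)^2 + (d 1 - t*p 1)^2 + (d 2 - t*p 2)^2 := by
    rw [hαdef, euclNorm, Real.sq_sqrt (by positivity), Fin.sum_univ_three]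
    simp [Pi.sub_apply, Pi.smul_apply, smul_eq_mul]
  have hα0' : 0 ≤ α := Real.sqrt_nonneg _
  have hP0 : 0 < P := by
    obtain ⟨j, hj⟩ := Function.ne_iff.mp hp
    have hj2 : 0 < p j ^ 2 := lt_of_le_of_ne (sq_nonneg _) (Ne.symm (pow_ne_zero 2 hj))
    rw [hPdef, euclNorm]
    apply Real.sqrt_pos.2
    rw [Fin.sum_univ_three]
    fin_cases j <;> simp at hj2 <;> nlinarith [sq_nonneg (p 0), sq_nonneg (p 1), sq_nonneg (p 2)]
  -- ζ facts
  set S : Set ℝ := {x : ℝ | ∃ t ∈ Set.Icc (-1 : ℝ) 1, x = euclNorm (d - t • p) / euclNorm p}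
    with hSdef
  have hSb : BddBelow S := by
    refine ⟨0, fun x hx => ?_⟩
    obtain ⟨t', _, rfl⟩ := hx
    exact div_nonneg (Real.sqrt_nonneg _) (Real.sqrt_nonneg _)
  have hmem : ∀ t' : ℝ, t' ∈ Set.Icc (-1:ℝ) 1 → ζ ≤ euclNorm (d - t' • p) / euclNorm p := by
    intro t' ht'
    rw [hζ]
    exact csInf_le hSb ⟨t', ht', rfl⟩
  have hζα : ζ * P ≤ α := by
    have := hmem t ht
    rw [← hPdef, ← hαdef] at this
    rw [le_div_iff₀ hP0] at this
    linarith
  have hα0 : 0 < α := lt_of_lt_of_le (mul_pos hζpos hP0) hζα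
  -- sigma-tau
  set σ : ℝ := z.re - t with hσdef
  set τ : ℝ := z.im with hτdef
  have hστ : σ^2 + τ^2 ≤ r^2 := by
    have h1 : ‖z - (t₀:ℂ)‖ ^ 2 ≤ r ^ 2 := by
      have h0 := norm_nonneg (z - (t₀:ℂ))
      nlinarith [hzt₀]
    have h2 : ‖z - (t₀:ℂ)‖ ^ 2 = (z.re - t₀)^2 + τ^2 := by
      rw [Complex.sq_norm, Complex.normSq_apply]
      simp [hτdef]
      ring
    have hclamp : σ^2 ≤ (z.re - t₀)^2 := by
      rw [hσdef]
      rcases le_or_gt z.re (-1) with h | h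
      · have htv : t = -1 := by
          rw [htdef, min_eq_right (by linarith : z.re ≤ 1), max_eq_left h]
        rw [htv]
        nlinarith [ht₀.1, ht₀.2]
      · rcases le_or_gt z.re 1 with h' | h'
        · have htv : t = z.re := by
            rw [htdef, min_eq_right h', max_eq_right h.le]
          rw [htv]
          nlinarith [sq_nonneg (z.re - t₀)]
        · have htv : t = 1 := by
            rw [htdef, min_eq_left h'.le, max_eq_right (by norm_num : (-1:ℝ) ≤ 1)]
          rw [htv]
          nlinarith [ht₀.1, ht₀.2]
    linarith [h1, h2, hclamp]
  have hσ2 : σ^2 ≤ r^2 := by nlinarith [sq_nonneg τ]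
  have hτ2 : τ^2 ≤ r^2 := by nlinarith [sq_nonneg σ]
  -- complex s
  set s : ℂ := z - (t:ℂ) with hsdef
  have hsre : s.re = σ := by simp [hsdef, hσdef]
  have hsim : s.im = τ := by simp [hsdef, hτdef]
  have hz_eq : z = s + (t:ℂ) := by rw [hsdef]; ring
  -- K, W
  set K : ℝ := (d 0 - t*p 0)*p 0 + (d 1 - t*p 1)*p 1 + (d 2 - t*p 2)*p 2 with hKdef
  have hK : K^2 ≤ α^2 * P^2 := by
    have h := Finset.sum_mul_sq_le_sq_mul_sq Finset.univ (fun i => d i - t * p i) p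
    simp only [Fin.sum_univ_three] at h
    rw [hα2, hP2]
    exact h
  set W : ℂ := ∑ j, ((d j : ℂ) - z * (p j : ℂ)) * ((d j : ℂ) - z * (p j : ℂ)) with hWdef
  have hW : W = ((α^2 : ℝ):ℂ) - 2*s*(K:ℂ) + s^2*((P^2:ℝ):ℂ) := by
    rw [hWdef, Fin.sum_univ_three, hα2, hP2, hKdef, hz_eq]
    push_cast
    ring
  have hWre : W.re = α^2 - 2*σ*K + (σ^2 - τ^2)*P^2 := by
    rw [hW]
    simp only [pow_two, Complex.add_re, Complex.sub_re, Complex.mul_re, Complex.mul_im,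
      Complex.ofReal_re, Complex.ofReal_im, Complex.re_ofNat, Complex.im_ofNat, hsre, hsim]
    ring
  have hWim : W.im = -2*τ*K + 2*σ*τ*P^2 := by
    rw [hW]
    simp only [pow_two, Complex.add_im, Complex.sub_im, Complex.mul_re, Complex.mul_im,
      Complex.ofReal_re, Complex.ofReal_im, Complex.re_ofNat, Complex.im_ofNat, hsre, hsim]
    ring
  -- sigma*K bounds
  have hσK_le : σ*K ≤ r*P*α := by
    have a1 : σ^2*K^2 ≤ r^2*K^2 := mul_le_mul_of_nonneg_right hσ2 (sq_nonneg K)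
    have a2 : r^2*K^2 ≤ r^2*(α^2*P^2) := mul_le_mul_of_nonneg_left hK (sq_nonneg r)
    have h1 : (σ*K)^2 ≤ (r*P*α)^2 := by nlinarith only [a1, a2]
    nlinarith only [mul_nonneg (mul_nonneg hr0 hP0.le) hα0', h1]
  have hαrP : r*P < α := lt_of_lt_of_le (mul_lt_mul_of_pos_right hrζ hP0) hζα
  -- W is not on the negative real axis
  have hWok : ¬(W.im = 0 ∧ W.re ≤ 0) := by
    rintro ⟨h1, h2⟩
    rw [hWim] at h1
    rw [hWre] at h2
    by_cases hτ0 : τ = 0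
    · rw [hτ0] at h2
      have hX : 0 < α^2 - σ*K := by
        nlinarith only [hσK_le, mul_pos hα0 (sub_pos.2 hαrP)]
      have h3 : α^2*(α^2 - 2*σ*K + (σ^2 - 0^2)*P^2) ≤ 0 :=
        mul_nonpos_of_nonneg_of_nonpos (sq_nonneg α) h2
      nlinarith only [h3, mul_pos hX hX, mul_nonneg (sq_nonneg σ) (sub_nonneg.2 hK)]
    · have hKσ : K = σ*P^2 := by
        have h3 : τ * (σ*P^2 - K) = 0 := by linarith [h1]
        rcases mul_eq_zero.mp h3 with h | h
        · exact absurd h hτ0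
        · linarith
      rw [hKσ] at h2
      have b1 : ζ*P*(ζ*P) ≤ α*α :=
        mul_self_le_mul_self (mul_pos hζpos hP0).le hζα
      have b2 : r*P*(r*P) < ζ*P*(ζ*P) :=
        mul_self_lt_mul_self (mul_nonneg hr0 hP0.le) (mul_lt_mul_of_pos_right hrζ hP0)
      have b3 : (σ^2+τ^2)*P^2 ≤ r^2*P^2 := mul_le_mul_of_nonneg_right hστ (sq_nonneg P)
      nlinarith only [b1, b2, b3, h2]
  -- the square root n
  have hndpz : ndp z = csqrt W := by
    simp only [hndp]; rfl
  set n : ℂ := csqrt W with hndef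
  have hn2 : n^2 = W := csqrt_sq W hWok
  have hnre : 0 ≤ n.re := csqrt_re_nonneg W
  have hnre2 : W.re ≤ n.re^2 := by
    have h := congrArg Complex.re hn2
    have h2 : (n^2).re = n.re^2 - n.im^2 := by rw [pow_two, Complex.mul_re]; ring
    nlinarith only [h, h2, sq_nonneg n.im]
  -- A and k
  set k : ℝ := K/α with hkdef
  have hαk : α*k = K := by rw [hkdef]; field_simp
  set A : ℂ := (α:ℂ) - s*((k:ℝ):ℂ) with hAdef
  have hAre : A.re = α - σ*k := by
    simp only [hAdef, Complex.sub_re, Complex.ofReal_re, Complex.mul_re, Complex.ofReal_im,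
      hsre, hsim]
    ring
  have hAim : A.im = -(τ*k) := by
    simp only [hAdef, Complex.sub_im, Complex.ofReal_im, Complex.mul_im, Complex.ofReal_re,
      hsre, hsim]
    ring
  have hk2 : k^2*α^2 = K^2 := by rw [hkdef]; field_simp
  have hkP : k^2 ≤ P^2 := by nlinarith only [hK, hk2, mul_pos hα0 hα0]
  set b : ℝ := P^2 - k^2 with hbdef
  have hb0 : 0 ≤ b := by rw [hbdef]; linarith only [hkP]
  have hbP : b ≤ P^2 := by rw [hbdef]; nlinarith only [sq_nonneg k]
  have hαkC : ((α:ℝ):ℂ)*((k:ℝ):ℂ) = ((K:ℝ):ℂ) := by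
    rw [← Complex.ofReal_mul, hαk]
  have hWA : W - A^2 = s^2*((b:ℝ):ℂ) := by
    rw [hW, hAdef, hbdef]
    push_cast
    linear_combination (2*s)*hαkC
  have hσk : σ*k ≤ r*P := by
    have h1 : σ*k*α ≤ r*P*α := by
      have h2 : σ*(α*k) ≤ r*P*α := by rw [hαk]; exact hσK_le
      linarith only [h2]
    exact le_of_mul_le_mul_right h1 hα0
  have hArge : (ζ-r)*P ≤ A.re := by rw [hAre]; linarith only [hζα, hσk]
  have hArepos : 0 < A.re := lt_of_lt_of_le (mul_pos (sub_pos.2 hrζ) hP0) hArge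
  -- |Im(n-A)| ≤ r² b / (n.re + A.re)
  have habsWA : ‖W - A^2‖ ≤ r^2*b := by
    rw [hWA, norm_mul, Complex.norm_of_nonneg hb0, norm_pow]
    have h1 : ‖s‖ ^ 2 = σ^2 + τ^2 := by
      rw [Complex.sq_norm, Complex.normSq_apply, hsre, hsim]; ring
    nlinarith only [h1, hστ, hb0]
  have hnA : n + A ≠ 0 := by
    intro h
    have := congrArg Complex.re h
    simp only [Complex.add_re, Complex.zero_re] at this
    linarith only [this, hnre, hArepos]
  have hposd : 0 < n.re + A.re := by linarith only [hnre, hArepos]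
  have hImbound : |(n - A).im| ≤ (r^2*b)/(n.re + A.re) := by
    have h1 : |(n-A).im| ≤ ‖n - A‖ := Complex.abs_im_le_norm _
    have hfac : n - A = (W - A^2)/(n + A) := by
      rw [eq_div_iff hnA]
      linear_combination hn2
    have h2 : ‖n - A‖ = ‖W - A^2‖/‖n+A‖ := by
      rw [hfac, norm_div]
    have h3 : n.re + A.re ≤ ‖n+A‖ := by
      have h4 := Complex.re_le_norm (n+A)
      simpa using h4
    have h5 : ‖W - A^2‖/‖n+A‖ ≤ ‖W - A^2‖/(n.re+A.re) := by
      gcongr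
    have h6 : ‖W - A^2‖/(n.re+A.re) ≤ (r^2*b)/(n.re+A.re) := by gcongr
    linarith only [h1, h2, h3, h5, h6, h2 ▸ h1]
  -- G and w
  set G : ℝ := α^2*P^2 - K^2 with hGdef
  have hG0 : 0 ≤ G := by rw [hGdef]; linarith only [hK]
  have hbG : b*α^2 = G := by rw [hbdef, hGdef]; linarith only [hk2]
  set wv : ℝ := Real.sqrt G / P^2 with hwdef
  have hw0 : 0 ≤ wv := div_nonneg (Real.sqrt_nonneg _) (sq_nonneg _)
  have hw2 : wv^2*P^4 = G := by
    rw [hwdef, div_pow, Real.sq_sqrt hG0, show (P^4 : ℝ) = (P^2)^2 by ring,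
      div_mul_cancel₀ _ (by positivity : ((P:ℝ)^2)^2 ≠ 0)]
  have hGpoly : ∀ t' : ℝ, ((d 0 - t'*p 0)^2+(d 1 - t'*p 1)^2+(d 2 - t'*p 2)^2)*(p 0^2+p 1^2+p 2^2)
      - ((d 0 - t'*p 0)*p 0+(d 1 - t'*p 1)*p 1+(d 2 - t'*p 2)*p 2)^2 = G := by
    intro t'
    rw [hGdef, hα2, hP2, hKdef]
    ring
  have hnorm2 : ∀ t' : ℝ, (euclNorm (d - t' • p))^2
      = (d 0 - t'*p 0)^2+(d 1 - t'*p 1)^2+(d 2 - t'*p 2)^2 := by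
    intro t'
    rw [euclNorm, Real.sq_sqrt (by positivity), Fin.sum_univ_three]
    simp [Pi.sub_apply, Pi.smul_apply, smul_eq_mul]
  have hwζ : wv ≤ ζ := by
    rw [hζ]
    have hSne : S.Nonempty := ⟨euclNorm (d - (0:ℝ) • p)/euclNorm p, ⟨0, by norm_num, rfl⟩⟩
    apply le_csInf hSne
    rintro x ⟨t', ht', rfl⟩
    have hx2 := hnorm2 t'
    have hx0 : 0 ≤ euclNorm (d - t' • p) := Real.sqrt_nonneg _
    rw [← hPdef, le_div_iff₀ hP0]
    have h1 : (wv*P)^2 ≤ (euclNorm (d - t' • p))^2 := by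
      have h2 := hGpoly t'
      nlinarith only [h2, hw2, hx2, hP2,
        sq_nonneg ((d 0 - t'*p 0)*p 0+(d 1 - t'*p 1)*p 1+(d 2 - t'*p 2)*p 2),
        mul_pos hP0 hP0]
    nlinarith only [h1, hx0, mul_nonneg hw0 hP0.le]
  have hζα2 : ζ^2*P^2 ≤ α^2 := by nlinarith only [hζα, mul_pos hζpos hP0]
  -- MAIN INEQUALITY
  have hH : 2*(ζ-r)*b ≤ (n.re + A.re)*P := by
    rcases le_or_gt (σ*K) 0 with hcase | hcase
    · -- Case 1 : σK ≤ 0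
      have hσk0 : σ*k ≤ 0 := by
        have h1 : σ*(α*k) ≤ 0 := by rw [hαk]; exact hcase
        nlinarith only [h1, hα0]
      have hAα : α ≤ A.re := by rw [hAre]; linarith only [hσk0]
      have hττ : (σ^2+τ^2)*P^2 ≤ r^2*P^2 := mul_le_mul_of_nonneg_right hστ (sq_nonneg P)
      have hWlb : α^2 - r^2*P^2 ≤ W.re := by
        rw [hWre]
        nlinarith only [hcase, hττ, sq_nonneg (σ*P)]
      have hα2w : wv^2*P^2 ≤ α^2 := by
        have h1 : b*α^2 ≤ P^2*α^2 := mul_le_mul_of_nonneg_right hbP (sq_nonneg α)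
        nlinarith only [hw2, hbG, h1, mul_pos hP0 hP0]
      have hζP2pos : (0:ℝ) < ζ^2*P^2 := by positivity
      rcases le_or_gt wv r with hwr | hwr
      · -- wv ≤ r
        have h1 : b*(ζ^2*P^2) ≤ r^2*P^4 := by
          have h2 : b*(ζ^2*P^2) ≤ b*α^2 := mul_le_mul_of_nonneg_left hζα2 hb0
          have h3 : wv*wv ≤ r*r := mul_self_le_mul_self hw0 hwr
          have h5 : b*α^2 = wv^2*P^4 := by rw [hbG, hw2]
          have h6 : wv^2*P^4 ≤ r^2*P^4 :=
            mul_le_mul_of_nonneg_right (by nlinarith only [h3]) (by positivity)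
          linarith only [h2, h5, h6]
        have h2 : 2*(ζ-r)*r^2 ≤ ζ^3 := by
          linarith only [mul_nonneg hr0 (sq_nonneg (ζ - r)),
            mul_nonneg (sq_nonneg ζ) (sub_nonneg.2 hrζ.le), pow_nonneg hr0 3]
        have h3 : 2*(ζ-r)*b*(ζ^2*P^2) ≤ ζ*P^2*(ζ^2*P^2) := by
          have h4 : 2*(ζ-r)*(b*(ζ^2*P^2)) ≤ 2*(ζ-r)*(r^2*P^4) :=
            mul_le_mul_of_nonneg_left h1 (by linarith only [hrζ])
          have h5 : 2*(ζ-r)*r^2*P^4 ≤ ζ^3*P^4 :=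
            mul_le_mul_of_nonneg_right h2 (by positivity)
          nlinarith only [h4, h5]
        have h4 : 2*(ζ-r)*b ≤ ζ*P^2 := le_of_mul_le_mul_right h3 hζP2pos
        have h5 : ζ*P^2 ≤ (n.re+A.re)*P := by
          have h6 : α*P ≤ A.re*P := mul_le_mul_of_nonneg_right hAα hP0.le
          have h7 : ζ*P*P ≤ α*P := mul_le_mul_of_nonneg_right hζα hP0.le
          nlinarith only [h6, h7, mul_nonneg hnre hP0.le]
        linarith only [h4, h5]
      · -- r < wv
        set y : ℝ := Real.sqrt (wv^2 - r^2) with hydef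
        have hy0 : 0 ≤ y := Real.sqrt_nonneg _
        have hy2 : y^2 = wv^2 - r^2 := Real.sq_sqrt (by nlinarith only [hwr, hr0])
        have hyw : y ≤ wv := by nlinarith only [hy2, hy0, hw0, sq_nonneg r]
        have hyζ : y ≤ ζ := le_trans hyw hwζ
        have hnre_y : y*P ≤ n.re := by
          nlinarith only [hnre2, hWlb, hα2w, hy2, mul_nonneg hy0 hP0.le, hnre,
            mul_pos hP0 hP0]
        have hmain := ineq1 ζ r y wv hr0 hrζ hy0 hyζ (by nlinarith only [hy2])
        have h1 : 2*(ζ-r)*b*(ζ^2*P^2) ≤ (ζ^3 + ζ^2*y)*P^4 := by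
          have h2 : b*(ζ^2*P^2) ≤ b*α^2 := mul_le_mul_of_nonneg_left hζα2 hb0
          have h3 : 2*(ζ-r)*(wv^2*P^4) ≤ (ζ^3 + ζ^2*y)*P^4 := by
            have := mul_le_mul_of_nonneg_right hmain (pow_nonneg hP0.le 4)
            nlinarith only [this]
          have h4 : 2*(ζ-r)*(b*(ζ^2*P^2)) ≤ 2*(ζ-r)*(b*α^2) :=
            mul_le_mul_of_nonneg_left h2 (by linarith only [hrζ])
          have h5 : b*α^2 = wv^2*P^4 := by rw [hbG, hw2]
          have h6 : 2*(ζ-r)*(b*α^2) = 2*(ζ-r)*(wv^2*P^4) := by rw [h5]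
          linarith only [h3, h4, h6]
        have h2 : (ζ^3 + ζ^2*y)*P^4 ≤ (n.re+A.re)*P*(ζ^2*P^2) := by
          have h6 : α*P ≤ A.re*P := mul_le_mul_of_nonneg_right hAα hP0.le
          have h7 : ζ*P*P ≤ α*P := mul_le_mul_of_nonneg_right hζα hP0.le
          have h8 : y*P*(ζ^2*P^2) ≤ n.re*(ζ^2*P^2) :=
            mul_le_mul_of_nonneg_right hnre_y hζP2pos.le
          nlinarith only [h6, h7, h8, mul_pos hζP2pos hP0, hζP2pos,
            mul_le_mul_of_nonneg_left h7 hζP2pos.le, mul_le_mul_of_nonneg_left h6 hζP2pos.le]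
        exact le_of_mul_le_mul_right (by linarith only [h1, h2]) hζP2pos
    · -- Case 2 : σK > 0
      have hσne : σ ≠ 0 := by
        intro h
        rw [h] at hcase
        simp at hcase
      -- α = ζ P
      have hαζP : α = ζ*P := by
        have hup : ∀ t' ∈ Set.Icc (-1:ℝ) 1, α^2 ≤ (euclNorm (d - t' • p))^2 := by
          intro t' ht'
          have hx2 := hnorm2 t'
          have hident : (euclNorm (d - t' • p))^2
              = α^2 - 2*(t'-t)*K + (t'-t)^2*P^2 := by
            rw [hx2, hα2, hKdef, hP2]; ring
          rw [hident]
          rcases lt_trichotomy σ 0 with hσneg | hσ0 | hσpos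
          · -- t = -1, K < 0
            have htm : t = -1 := by
              have hξm : z.re < -1 := by
                by_contra h'
                push_neg at h'
                have h2 : t ≤ z.re := by
                  rw [htdef]
                  exact max_le h' (min_le_right _ _)
                rw [hσdef] at hσneg
                linarith only [h2, hσneg]
              rw [htdef, min_eq_right (by linarith only [hξm] : z.re ≤ 1),
                max_eq_left (by linarith only [hξm] : z.re ≤ -1)]
            have hKneg : K < 0 := by nlinarith only [hcase, hσneg]
            have h1 : 0 ≤ (t'-t)*(-K) :=
              mul_nonneg (by rw [htm]; linarith only [ht'.1]) (by linarith only [hKneg])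
            nlinarith only [h1, sq_nonneg ((t'-t)*P)]
          · exact absurd hσ0 hσne
          · -- t = 1, K > 0
            have ht1 : t = 1 := by
              have hξ1 : 1 < z.re := by
                by_contra h'
                push_neg at h'
                have h2 : z.re ≤ t := by
                  rw [htdef, min_eq_right h']
                  exact le_max_right _ _
                rw [hσdef] at hσpos
                linarith only [h2, hσpos]
              rw [htdef, min_eq_left hξ1.le, max_eq_right (by norm_num : (-1:ℝ) ≤ 1)]
            have hKpos : 0 < K := by nlinarith only [hcase, hσpos]
            have h1 : 0 ≤ (t-t')*K :=
              mul_nonneg (by rw [ht1]; linarith only [ht'.2]) hKpos.le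
            nlinarith only [h1, sq_nonneg ((t'-t)*P)]
        have h1 : α/P ≤ ζ := by
          rw [hζ]
          have hSne : S.Nonempty := ⟨euclNorm (d - (0:ℝ) • p)/euclNorm p, ⟨0, by norm_num, rfl⟩⟩
          apply le_csInf hSne
          rintro x ⟨t', ht', rfl⟩
          have h2 := hup t' ht'
          have hx0 : 0 ≤ euclNorm (d - t' • p) := Real.sqrt_nonneg _
          rw [← hPdef]
          have h3 : α ≤ euclNorm (d - t' • p) := by nlinarith only [h2, hx0, hα0']
          gcongr
        have h4 : α ≤ ζ*P := by
          rw [div_le_iff₀ hP0] at h1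
          linarith only [h1]
        linarith only [h4, hζα]
      have hα2ζ : α^2 = ζ^2*P^2 := by rw [hαζP]; ring
      have hGζ : G = ζ^2*P^4 - K^2 := by rw [hGdef, hα2ζ]; ring
      have hττ : (σ^2+τ^2)*P^2 ≤ r^2*P^2 := mul_le_mul_of_nonneg_right hστ (sq_nonneg P)
      have hbv : b*ζ^2 = wv^2*P^2 := by
        have h7 : (b*ζ^2)*P^2 = (wv^2*P^2)*P^2 := by
          linear_combination hbG - hw2 - b*hα2ζ
        exact mul_right_cancel₀ (by positivity) h7
      rcases lt_trichotomy σ 0 with hσneg | hσ0 | hσpos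
      · -- σ < 0, K < 0
        have hKneg : K < 0 := by nlinarith only [hcase, hσneg]
        set gv : ℝ := -K/P^2 with hgvdef
        have hgv0 : 0 ≤ gv := div_nonneg (by linarith only [hKneg]) (sq_nonneg P)
        have hgvP : gv*P^2 = -K := by rw [hgvdef]; field_simp
        have hgv2 : gv^2*P^4 = K^2 := by
          have := congrArg (fun x => x^2) hgvP
          nlinarith only [this]
        have hgw : gv^2 + wv^2 = ζ^2 := by
          have h7 : (gv^2 + wv^2)*P^4 = ζ^2*P^4 := by
            linear_combination hgv2 + hw2 + hGζ
          exact mul_right_cancel₀ (by positivity) h7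
        have hσr' : -σ ≤ r := by nlinarith only [hσ2, hσneg, hr0]
        have hζk : ζ*k*P = -(gv*P)*P := by
          have h8 : ζ*P*k = K := by rw [← hαζP]; exact hαk
          linear_combination h8 + hgvP
        have hζk' : ζ*k = -(gv*P) := mul_right_cancel₀ hP0.ne' hζk
        have hAreV : A.re*ζ = ζ^2*P - (-σ)*gv*P := by
          rw [hAre]
          linear_combination ζ*hαζP - σ*hζk'
        have hσKv : σ*K = (-σ)*gv*P^2 := by
          have : σ*K = σ*(-(gv*P^2)) := by rw [hgvP]; ring
          linarith only [this]
        have hnre2v : P^2*(ζ^2 - 2*(-σ)*gv + 2*(-σ)^2 - r^2) ≤ n.re^2 := by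
          have h9 : W.re = ζ^2*P^2 - 2*((-σ)*gv*P^2) + (σ^2-τ^2)*P^2 := by
            rw [hWre]; linear_combination hα2ζ - 2*hσKv
          nlinarith only [hnre2, h9, hττ, sq_nonneg (σ*P)]
        exact aux2 ζ r P (-σ) gv wv b n.re A.re hP0 hr0 hrζ (by linarith only [hσneg])
          hσr' hgv0 hgw hAreV hnre hnre2v hbv
      · exact absurd hσ0 hσne
      · -- σ > 0, K > 0
        have hKpos : 0 < K := by nlinarith only [hcase, hσpos]
        set gv : ℝ := K/P^2 with hgvdef
        have hgv0 : 0 ≤ gv := div_nonneg hKpos.le (sq_nonneg P)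
        have hgvP : gv*P^2 = K := by rw [hgvdef]; field_simp
        have hgv2 : gv^2*P^4 = K^2 := by
          have := congrArg (fun x => x^2) hgvP
          nlinarith only [this]
        have hgw : gv^2 + wv^2 = ζ^2 := by
          have h7 : (gv^2 + wv^2)*P^4 = ζ^2*P^4 := by
            linear_combination hgv2 + hw2 + hGζ
          exact mul_right_cancel₀ (by positivity) h7
        have hσr' : σ ≤ r := by nlinarith only [hσ2, hσpos, hr0]
        have hζk : ζ*k*P = gv*P*P := by
          have h8 : ζ*P*k = K := by rw [← hαζP]; exact hαk
          linear_combination h8 - hgvP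
        have hζk' : ζ*k = gv*P := mul_right_cancel₀ hP0.ne' hζk
        have hAreV : A.re*ζ = ζ^2*P - σ*gv*P := by
          rw [hAre]
          linear_combination ζ*hαζP - σ*hζk'
        have hσKv : σ*K = σ*gv*P^2 := by rw [← hgvP]; ring
        have hnre2v : P^2*(ζ^2 - 2*σ*gv + 2*σ^2 - r^2) ≤ n.re^2 := by
          have h9 : W.re = ζ^2*P^2 - 2*(σ*gv*P^2) + (σ^2-τ^2)*P^2 := by
            rw [hWre]; linear_combination hα2ζ - 2*hσKv
          nlinarith only [hnre2, h9, hττ, sq_nonneg (σ*P)]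
        exact aux2 ζ r P σ gv wv b n.re A.re hP0 hr0 hrζ hσpos.le
          hσr' hgv0 hgw hAreV hnre hnre2v hbv
  -- bound 1
  have hbound1 : |(n - A).im| ≤ P*r^2/(2*(ζ-r)) := by
    rcases eq_or_lt_of_le hb0 with hb | hb
    · -- b = 0 : n = A
      have hW0 : W = A^2 := by
        have h1 : W - A^2 = 0 := by rw [hWA, ← hb]; simp
        exact sub_eq_zero.mp h1
      have hnAeq : n = A := by rw [hndef, hW0]; exact csqrt_sq_self A hArepos
      rw [hnAeq]
      simp only [sub_self, Complex.zero_im, abs_zero]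
      apply div_nonneg (mul_nonneg hP0.le (sq_nonneg r))
      linarith only [hrζ]
    · have h2ζr : 0 < 2*(ζ-r) := by linarith only [hrζ]
      calc |(n-A).im| ≤ (r^2*b)/(n.re+A.re) := hImbound
        _ ≤ P*r^2/(2*(ζ-r)) := by
            rw [div_le_div_iff₀ hposd h2ζr]
            nlinarith only [mul_le_mul_of_nonneg_left hH (sq_nonneg r)]
  -- the direction term
  set Ca : ℝ := (d 0 - t*p 0)*c 0 + (d 1 - t*p 1)*c 1 + (d 2 - t*p 2)*c 2 with hCadef
  set Cp : ℝ := p 0*c 0 + p 1*c 1 + p 2*c 2 with hCpdef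
  have hsum2 : (∑ j, ((d j : ℂ) - z * (p j : ℂ)) * (c j : ℂ)) = ((Ca:ℝ):ℂ) - s*((Cp:ℝ):ℂ) := by
    rw [Fin.sum_univ_three, hz_eq, hCadef, hCpdef]
    push_cast
    ring
  have hImsum : (∑ j, ((d j : ℂ) - z * (p j : ℂ)) * (c j : ℂ)).im = -(τ*Cp) := by
    rw [hsum2]
    simp only [Complex.sub_im, Complex.ofReal_im, Complex.mul_im, Complex.ofReal_re, hsim]
    ring
  set eN : ℝ := euclNorm ((α)⁻¹ • (d - t • p) - c) with heNdef
  have heN0 : 0 ≤ eN := Real.sqrt_nonneg _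
  have heN2 : eN^2 = (α⁻¹*(d 0 - t*p 0) - c 0)^2 + (α⁻¹*(d 1 - t*p 1) - c 1)^2
      + (α⁻¹*(d 2 - t*p 2) - c 2)^2 := by
    rw [heNdef, euclNorm, Real.sq_sqrt (by positivity), Fin.sum_univ_three]
    simp [Pi.sub_apply, Pi.smul_apply, smul_eq_mul]
  have hCS2 : (Cp - k)^2 ≤ P^2*eN^2 := by
    have h := Finset.sum_mul_sq_le_sq_mul_sq Finset.univ p
      (fun j => α⁻¹*(d j - t*p j) - c j)
    simp only [Fin.sum_univ_three] at h
    have hlhs : p 0*(α⁻¹*(d 0 - t*p 0) - c 0) + p 1*(α⁻¹*(d 1 - t*p 1) - c 1)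
        + p 2*(α⁻¹*(d 2 - t*p 2) - c 2) = k - Cp := by
      rw [hkdef, hKdef, hCpdef]
      field_simp
      ring
    rw [hlhs] at h
    rw [heN2, hP2]
    nlinarith only [h]
  have hbound2 : |τ*(Cp - k)| ≤ P*eN*r := by
    have hm0 : 0 ≤ P*eN*r := mul_nonneg (mul_nonneg hP0.le heN0) hr0
    have hx2 : (τ*(Cp-k))^2 ≤ (P*eN*r)^2 := by
      have a1 : τ^2*(Cp-k)^2 ≤ r^2*(Cp-k)^2 := mul_le_mul_of_nonneg_right hτ2 (sq_nonneg _)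
      have a2 : r^2*(Cp-k)^2 ≤ r^2*(P^2*eN^2) := mul_le_mul_of_nonneg_left hCS2 (sq_nonneg r)
      nlinarith only [a1, a2]
    rw [abs_le]
    constructor <;> nlinarith only [hx2, hm0]
  -- final
  have hfinal_im : (ndp z - ∑ j, ((d j : ℂ) - z * (p j : ℂ)) * (c j : ℂ)).im
      = (n - A).im + τ*(Cp - k) := by
    rw [hndpz]
    simp only [Complex.sub_im]
    rw [hImsum, hAim]
    ring
  rw [hfinal_im]
  calc |(n-A).im + τ*(Cp-k)| ≤ |(n-A).im| + |τ*(Cp-k)| := abs_add_le _ _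
    _ ≤ P*r^2/(2*(ζ-r)) + P*eN*r := add_le_add hbound1 hbound2
    _ = P*(eN*r + r^2/(2*(ζ-r))) := by ring
end
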